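/- Let f : F_q^k → F_q^l be a surjective linear map, k ≥ 1, t ≥ 1, and let P ⊆ F_q^r be a code indexed by F_q^k with Hamming distances d_H(p_i, p_j) ≥ max(2t + 1 − d_H(u_i, u_j), 0) whenever f(u_i) ≠ f(u_j). Then r ≥ (q/(q−1))(2t+1)(1 − q^{−l}) − k + s/((q−1)q^{k−1}), where s = Σ_{u ∈ ker f} w_H(u). -/

import Mathlib

open Finset


lemma fiber_card (F : Type*) [Fintype F] [DecidableEq F] {k : ℕ} (j : Fin k) (a : F) :
    (univ.filter (fun w : Fin k → F => w j = a)).card = Fintype.card F ^ (k - 1) := by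
  rw [← Fintype.card_subtype]
  have e : {w : Fin k → F // w j = a} ≃ ({i : Fin k // i ≠ j} → F) :=
    { toFun := fun w i => w.1 i.1
      invFun := fun g => ⟨fun i => if h : i = j then a else g ⟨i, h⟩, by simp⟩
      left_inv := fun w => by
        ext i
        by_cases h : i = j
        · subst h; simpa using w.2.symm
        · simp [h]
      right_inv := fun g => by
        ext i
        simp [i.2] }
  rw [Fintype.card_congr e, Fintype.card_fun]
  congr 1
  have : Fintype.card {i : Fin k // i ≠ j} = Fintype.card (Fin k) - Fintype.card {i : Fin k // i = j} := by
    simpa using Fintype.card_subtype_compl (fun i : Fin k => i = j)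
  rw [this, Fintype.card_subtype_eq, Fintype.card_fin]

lemma fiber_ne_card (F : Type*) [Fintype F] [DecidableEq F] [Zero F] {k : ℕ} (j : Fin k)
    (hfib : (univ.filter (fun w : Fin k → F => w j = 0)).card = Fintype.card F ^ (k - 1)) :
    (univ.filter (fun w : Fin k → F => w j ≠ 0)).card + Fintype.card F ^ (k-1)
      = Fintype.card F ^ k := by
  rw [← hfib, add_comm]
  have := Finset.card_filter_add_card_filter_not
    (s := (univ : Finset (Fin k → F))) (p := fun w => w j = 0)
  simp only [ne_eq]
  rw [this, card_univ, Fintype.card_fun, Fintype.card_fin]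

lemma sum_norm_all (F : Type*) [Fintype F] [DecidableEq F] [Zero F] {k : ℕ} :
    ∑ w : Fin k → F, hammingNorm w + k * Fintype.card F ^ (k-1)
      = k * Fintype.card F ^ k := by
  classical
  have h1 : ∀ w : Fin k → F, hammingNorm w = ∑ j : Fin k, if w j ≠ 0 then 1 else 0 := by
    intro w; rw [hammingNorm, Finset.card_filter]
  simp_rw [h1]
  rw [Finset.sum_comm]
  have h2 : ∀ j : Fin k, (∑ w : Fin k → F, if w j ≠ 0 then 1 else 0)
      = (univ.filter (fun w : Fin k → F => w j ≠ 0)).card := by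
    intro j; rw [Finset.card_filter]
  have h3 : ∀ j : Fin k, (∑ w : Fin k → F, if w j ≠ 0 then 1 else 0) + Fintype.card F ^ (k-1)
      = Fintype.card F ^ k := by
    intro j
    rw [h2 j]
    exact fiber_ne_card F j (fiber_card F j 0)
  calc (∑ j : Fin k, ∑ w : Fin k → F, if w j ≠ 0 then 1 else 0) + k * Fintype.card F ^ (k-1)
      = ∑ j : Fin k, ((∑ w : Fin k → F, if w j ≠ 0 then 1 else 0) + Fintype.card F ^ (k-1)) := by
        rw [Finset.sum_add_distrib]; simp [mul_comm]
    _ = ∑ j : Fin k, Fintype.card F ^ k := by exact Finset.sum_congr rfl fun j _ => h3 j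
    _ = k * Fintype.card F ^ k := by simp [mul_comm]

section
variable {F : Type*} [Field F] [Fintype F] [DecidableEq F] {k l : ℕ}
  (f : (Fin k → F) →ₗ[F] (Fin l → F))

lemma sum_dist_ker (u : Fin k → F) :
    ∑ v ∈ univ.filter (fun v : Fin k → F => f v = f u), hammingDist u v
      = ∑ w ∈ univ.filter (fun w : Fin k → F => f w = 0), hammingNorm w := by
  apply Finset.sum_nbij' (i := fun v => u - v) (j := fun w => u - w)
  · intro v hv
    simp only [mem_filter, mem_univ, true_and] at hv ⊢
    rw [map_sub, hv, sub_self]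
  · intro w hw
    simp only [mem_filter, mem_univ, true_and] at hw ⊢
    rw [map_sub, hw, sub_zero]
  · intro v _; simp
  · intro w _; simp
  · intro v _; rw [hammingDist_comm, hammingDist_eq_hammingNorm, neg_add_eq_sub]

lemma card_fiber_ker (u : Fin k → F) :
    (univ.filter (fun v : Fin k → F => f v = f u)).card
      = (univ.filter (fun w : Fin k → F => f w = 0)).card := by
  apply Finset.card_nbij' (i := fun v => u - v) (j := fun w => u - w)
  · intro v hv
    simp only [mem_coe, mem_filter, mem_univ, true_and] at hv ⊢
    rw [map_sub, hv, sub_self]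
  · intro w hw
    simp only [mem_coe, mem_filter, mem_univ, true_and] at hw ⊢
    rw [map_sub, hw, sub_zero]
  · intro v _; simp
  · intro w _; simp

lemma sum_dist_all (u : Fin k → F) :
    ∑ v : Fin k → F, hammingDist u v = ∑ w : Fin k → F, hammingNorm w := by
  refine (Fintype.sum_equiv (Equiv.subLeft u) _ _ fun w => ?_).symm
  simp [Equiv.subLeft, hammingDist_eq_hammingNorm]
  rw [← hammingDist_eq_hammingNorm, hammingDist_comm, hammingDist_eq_hammingNorm, neg_add_eq_sub,
    sub_sub_cancel]

end

lemma ker_card_mul {F : Type*} [Field F] [Fintype F] [DecidableEq F] {k l : ℕ}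
    (f : (Fin k → F) →ₗ[F] (Fin l → F)) (hf : Function.Surjective f) :
    (univ.filter (fun w : Fin k → F => f w = 0)).card * Fintype.card F ^ l
      = Fintype.card F ^ k := by
  have h1 := AddSubgroup.card_eq_card_quotient_mul_card_addSubgroup (f.toAddMonoidHom.ker)
  have e : ((Fin k → F) ⧸ f.toAddMonoidHom.ker) ≃+ (Fin l → F) :=
    QuotientAddGroup.quotientKerEquivOfSurjective f.toAddMonoidHom hf
  have h2 : Nat.card ((Fin k → F) ⧸ f.toAddMonoidHom.ker) = Fintype.card F ^ l := by
    rw [Nat.card_congr e.toEquiv, Nat.card_eq_fintype_card, Fintype.card_fun, Fintype.card_fin]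
  have h3 : Nat.card (f.toAddMonoidHom.ker) = (univ.filter (fun w : Fin k → F => f w = 0)).card := by
    rw [Nat.card_eq_fintype_card, ← Fintype.card_subtype]
    apply Fintype.card_congr
    exact Equiv.subtypeEquivRight (fun w => by simp [AddMonoidHom.mem_ker])
  rw [h2, h3] at h1
  rw [mul_comm, ← h1, Nat.card_eq_fintype_card, Fintype.card_fun, Fintype.card_fin]

section
variable {α F : Type*} [Fintype α] [DecidableEq α] [Fintype F] [DecidableEq F]

lemma pair_count (g : α → F) :
    ∑ u : α, ∑ v : α, (if g u = g v then 1 else 0)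
      = ∑ a : F, ((univ.filter (fun u : α => g u = a)).card)^2 := by
  have h1 : ∀ u : α, (∑ v : α, if g u = g v then 1 else 0)
      = (univ.filter (fun v : α => g u = g v)).card := by
    intro u; rw [Finset.card_filter]
  simp_rw [h1]
  rw [← Finset.sum_fiberwise_of_maps_to (g := g) (t := univ) (fun x _ => mem_univ _)]
  refine Finset.sum_congr rfl fun a _ => ?_
  have h2 : ∀ u ∈ univ.filter (fun u : α => g u = a),
      (univ.filter (fun v : α => g u = g v)).card = (univ.filter (fun u : α => g u = a)).card := by
    intro u hu
    simp only [mem_filter, mem_univ, true_and] at hu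
    congr 1
    ext v
    simp [hu, eq_comm]
  rw [Finset.sum_congr rfl h2, Finset.sum_const, smul_eq_mul, sq]

lemma coord_CS (g : α → F) :
    (Fintype.card α)^2 ≤ Fintype.card F * ∑ a : F, ((univ.filter (fun u : α => g u = a)).card)^2 := by
  have h1 : ∑ a : F, (univ.filter (fun u : α => g u = a)).card = Fintype.card α := by
    rw [← Finset.card_eq_sum_card_fiberwise (f := g) (t := univ) (fun x _ => mem_univ _), card_univ]
  have h2 := sq_sum_le_card_mul_sum_sq (α := ℤ) (s := (univ : Finset F))
    (f := fun a => ((univ.filter (fun u : α => g u = a)).card : ℤ))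
  have h3 : ((Fintype.card α : ℤ))^2
      ≤ (Fintype.card F : ℤ) * ∑ a : F, (((univ.filter (fun u : α => g u = a)).card : ℤ))^2 := by
    calc ((Fintype.card α : ℤ))^2
        = (∑ a : F, (((univ.filter (fun u : α => g u = a)).card : ℤ)))^2 := by
          rw [← Nat.cast_sum, h1]
      _ ≤ _ := by simpa [card_univ] using h2
  exact_mod_cast h3

lemma coord_upper (g : α → F) :
    Fintype.card F * (∑ u : α, ∑ v : α, if g u ≠ g v then 1 else 0) + (Fintype.card α)^2
      ≤ Fintype.card F * (Fintype.card α)^2 := by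
  have hsplit : (∑ u : α, ∑ v : α, if g u ≠ g v then 1 else 0)
      + (∑ u : α, ∑ v : α, if g u = g v then 1 else 0) = (Fintype.card α)^2 := by
    rw [← Finset.sum_add_distrib]
    simp_rw [← Finset.sum_add_distrib]
    have : ∀ u v : α, ((if g u ≠ g v then 1 else 0) + if g u = g v then 1 else 0) = 1 := by
      intro u v; by_cases h : g u = g v <;> simp [h]
    simp_rw [this]
    simp [sq, card_univ]
  calc Fintype.card F * (∑ u : α, ∑ v : α, if g u ≠ g v then 1 else 0) + (Fintype.card α)^2
      ≤ Fintype.card F * (∑ u : α, ∑ v : α, if g u ≠ g v then 1 else 0)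
        + Fintype.card F * ∑ a : F, ((univ.filter (fun u : α => g u = a)).card)^2 :=
        Nat.add_le_add_left (coord_CS g) _
    _ = Fintype.card F * ((∑ u : α, ∑ v : α, if g u ≠ g v then 1 else 0)
        + (∑ u : α, ∑ v : α, if g u = g v then 1 else 0)) := by rw [← pair_count, mul_add]
    _ = _ := by rw [hsplit]

lemma dist_sum_upper {r : ℕ} (p : α → Fin r → F) :
    Fintype.card F * (∑ u : α, ∑ v : α, hammingDist (p u) (p v)) + r * (Fintype.card α)^2
      ≤ r * (Fintype.card F * (Fintype.card α)^2) := by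
  have h1 : ∀ u v : α, hammingDist (p u) (p v) = ∑ i : Fin r, if p u i ≠ p v i then 1 else 0 := by
    intro u v; rw [hammingDist, Finset.card_filter]
  calc Fintype.card F * (∑ u : α, ∑ v : α, hammingDist (p u) (p v)) + r * (Fintype.card α)^2
      = ∑ i : Fin r, (Fintype.card F * (∑ u : α, ∑ v : α, if p u i ≠ p v i then 1 else 0)
          + (Fintype.card α)^2) := by
        simp_rw [h1]
        rw [Finset.sum_add_distrib, ← Finset.mul_sum]
        congr 2
        · rw [Finset.sum_comm (γ := Fin r)]
          congr 1; ext u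
          exact Finset.sum_comm
        · simp [mul_comm]
    _ ≤ ∑ i : Fin r, Fintype.card F * (Fintype.card α)^2 :=
        Finset.sum_le_sum fun i _ => coord_upper (fun u => p u i)
    _ = _ := by simp [mul_comm]
end

theorem plotkin_bound_linear_FCC_hamming (F : Type*) [Field F] [Fintype F] [DecidableEq F]
    (q k l r t : ℕ) (hq : Fintype.card F = q) (hk : 1 ≤ k) (ht : 1 ≤ t)
    (f : (Fin k → F) →ₗ[F] (Fin l → F)) (hf : Function.Surjective f)
    (p : (Fin k → F) → (Fin r → F))
    (hp : ∀ u v : Fin k → F, f u ≠ f v →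
      (hammingDist (p u) (p v) : ℤ) ≥ max (2 * (t : ℤ) + 1 - hammingDist u v) 0) :
    (r : ℝ) ≥ ((q : ℝ) / ((q : ℝ) - 1)) * (2 * (t : ℝ) + 1) * (1 - ((q : ℝ) ^ l)⁻¹) - k +
      (∑ u ∈ Finset.univ.filter (fun u : Fin k → F => f u = 0), (hammingNorm u : ℝ)) /
        (((q : ℝ) - 1) * (q : ℝ) ^ (k - 1)) := by
  subst hq
  obtain ⟨m, rfl⟩ : ∃ m, k = m + 1 := ⟨k - 1, (Nat.succ_pred_eq_of_pos hk).symm⟩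
  set q := Fintype.card F with hq
  set N : ℕ := q ^ (m + 1) with hN
  set K : ℕ := (univ.filter (fun w : Fin (m+1) → F => f w = 0)).card with hKdef
  set s : ℕ := ∑ w ∈ univ.filter (fun w : Fin (m+1) → F => f w = 0), hammingNorm w with hsdef
  set A : ℕ := ∑ u : Fin (m+1) → F, ∑ v : Fin (m+1) → F, hammingDist (p u) (p v) with hAdef
  set Sall : ℕ := ∑ w : Fin (m+1) → F, hammingNorm w with hSdef
  have hcard : Fintype.card (Fin (m+1) → F) = N := by
    rw [Fintype.card_fun, Fintype.card_fin]
  -- upper bound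
  have hA : q * A + r * N ^ 2 ≤ r * (q * N ^ 2) := by
    have := dist_sum_upper p
    rwa [hcard] at this
  -- total norm sum
  have hSall : Sall + (m+1) * q ^ m = (m+1) * q ^ (m+1) := by
    have := sum_norm_all (F := F) (k := m+1)
    simpa using this
  -- kernel cardinality
  have hK : K * q ^ l = q ^ (m+1) := ker_card_mul f hf
  -- fibers of f
  have hMu : ∀ u : Fin (m+1) → F,
      (univ.filter (fun v : Fin (m+1) → F => ¬ f v = f u)).card + K = N := by
    intro u
    have h1 := Finset.card_filter_add_card_filter_not
      (s := (univ : Finset (Fin (m+1) → F))) (p := fun v => f v = f u)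
    rw [card_univ, hcard] at h1
    rw [add_comm, hKdef, ← card_fiber_ker f u, h1]
  -- per-u lower bound, in ℤ
  have per_u : ∀ u : Fin (m+1) → F,
      (2*(t:ℤ)+1) * ((N:ℤ) - K) + (s:ℤ)
        ≤ (∑ v : Fin (m+1) → F, (hammingDist (p u) (p v) : ℤ))
          + (∑ v : Fin (m+1) → F, (hammingDist u v : ℤ)) := by
    intro u
    set Fne := univ.filter (fun v : Fin (m+1) → F => ¬ f v = f u) with hFne
    have h1 : ∑ v ∈ Fne, ((2*(t:ℤ)+1) - hammingDist u v)
        ≤ ∑ v ∈ Fne, (hammingDist (p u) (p v) : ℤ) := by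
      refine Finset.sum_le_sum fun v hv => ?_
      have hne : f u ≠ f v := fun h => (mem_filter.mp hv).2 h.symm
      exact le_trans (le_max_left _ _) (hp u v hne)
    have h2 : ∑ v ∈ Fne, (hammingDist (p u) (p v) : ℤ)
        ≤ ∑ v : Fin (m+1) → F, (hammingDist (p u) (p v) : ℤ) :=
      Finset.sum_le_sum_of_subset_of_nonneg (subset_univ _)
        (fun _ _ _ => Int.natCast_nonneg _)
    have h3 : ∑ v ∈ Fne, ((2*(t:ℤ)+1) - hammingDist u v)
        = (2*(t:ℤ)+1) * Fne.card - ∑ v ∈ Fne, (hammingDist u v : ℤ) := by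
      rw [Finset.sum_sub_distrib, Finset.sum_const, nsmul_eq_mul, mul_comm]
    have h4 : ∑ v ∈ univ.filter (fun v : Fin (m+1) → F => f v = f u), (hammingDist u v : ℤ)
        + ∑ v ∈ Fne, (hammingDist u v : ℤ)
        = ∑ v : Fin (m+1) → F, (hammingDist u v : ℤ) := by
      have h := Finset.sum_filter_add_sum_filter_not (univ : Finset (Fin (m+1) → F))
        (fun v => f v = f u) (fun v => (hammingDist u v : ℤ))
      rw [← hFne] at h
      exact h
    have h5 : ∑ v ∈ univ.filter (fun v : Fin (m+1) → F => f v = f u), (hammingDist u v : ℤ)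
        = (s : ℤ) := by
      rw [← Nat.cast_sum, sum_dist_ker f u, hsdef]
    have h6 : (Fne.card : ℤ) = (N : ℤ) - K := by
      have := hMu u
      rw [← hFne] at this  -- Fne.card + K = N
      omega
    rw [← h6]
    linarith [h1, h2, h3, h4, h5]
  -- master inequality in ℤ
  have master : (N:ℤ) * ((2*(t:ℤ)+1) * ((N:ℤ) - K) + s) ≤ (A:ℤ) + (N:ℤ) * Sall := by
    have hsum := Finset.sum_le_sum (s := (univ : Finset (Fin (m+1) → F)))
      (fun u _ => per_u u)
    have hL : ∑ _u : Fin (m+1) → F, ((2*(t:ℤ)+1) * ((N:ℤ) - K) + s)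
        = (N:ℤ) * ((2*(t:ℤ)+1) * ((N:ℤ) - K) + s) := by
      rw [Finset.sum_const, card_univ, hcard, nsmul_eq_mul]
    have hR : ∑ u : Fin (m+1) → F,
        ((∑ v : Fin (m+1) → F, (hammingDist (p u) (p v) : ℤ))
          + (∑ v : Fin (m+1) → F, (hammingDist u v : ℤ)))
        = (A:ℤ) + (N:ℤ) * Sall := by
      rw [Finset.sum_add_distrib]
      congr 1
      · rw [hAdef]; push_cast; ring
      · have : ∀ u : Fin (m+1) → F, ∑ v : Fin (m+1) → F, (hammingDist u v : ℤ) = (Sall : ℤ) := by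
          intro u
          rw [← Nat.cast_sum, sum_dist_all u, hSdef]
        rw [Finset.sum_congr rfl fun u _ => this u, Finset.sum_const, card_univ, hcard,
          nsmul_eq_mul]
    rw [hL, hR] at hsum
    exact hsum
  -- move to ℝ
  have hq2 : 2 ≤ q := Fintype.one_lt_card
  have hQ1 : (1:ℝ) < (q:ℝ) := by exact_mod_cast hq2
  have hQ0 : (0:ℝ) < (q:ℝ) := by linarith
  have hN' : (N:ℝ) = (q:ℝ) ^ (m+1) := by rw [hN]; push_cast; ring
  have hSall' : (Sall:ℝ) = ((m:ℝ)+1) * (q:ℝ)^(m+1) - ((m:ℝ)+1) * (q:ℝ)^m := by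
    have : ((Sall:ℝ)) + ((m:ℝ)+1) * (q:ℝ)^m = ((m:ℝ)+1) * (q:ℝ)^(m+1) := by
      exact_mod_cast congrArg (Nat.cast : ℕ → ℝ) hSall
    linarith
  have hK' : (K:ℝ) * (q:ℝ)^l = (q:ℝ)^(m+1) := by exact_mod_cast congrArg (Nat.cast : ℕ → ℝ) hK
  have hA' : (q:ℝ) * A ≤ (r:ℝ) * (N:ℝ)^2 * ((q:ℝ) - 1) := by
    have : ((q:ℝ) * A) + (r:ℝ) * (N:ℝ)^2 ≤ (r:ℝ) * ((q:ℝ) * (N:ℝ)^2) := by exact_mod_cast hA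
    nlinarith
  have master' : (N:ℝ) * ((2*(t:ℝ)+1) * ((N:ℝ) - K) + s) ≤ (A:ℝ) + (N:ℝ) * Sall := by
    exact_mod_cast master
  have hfinal : (q:ℝ) * ((N:ℝ) * ((2*(t:ℝ)+1) * ((N:ℝ) - K) + s) - (N:ℝ) * Sall)
      ≤ (r:ℝ) * (N:ℝ)^2 * ((q:ℝ) - 1) := by
    nlinarith [master', hA', hQ0]
  -- final algebra
  have hQlpos : (0:ℝ) < (q:ℝ)^l := pow_pos hQ0 l
  have hQmpos : (0:ℝ) < (q:ℝ)^m := pow_pos hQ0 m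
  have hQm1pos : (0:ℝ) < (q:ℝ)^(m+1) := pow_pos hQ0 (m+1)
  have hKval : (K:ℝ) = (q:ℝ)^(m+1) * ((q:ℝ)^l)⁻¹ := by
    field_simp [← hK']
    exact hK'
  have hsimp : ((m+1 : ℕ) - 1) = m := by omega
  rw [ge_iff_le]
  have hDpos : (0:ℝ) < ((q:ℝ)-1) * ((q:ℝ)^(m+1) * (q:ℝ)^(m+1) * (q:ℝ)^l) :=
    mul_pos (by linarith) (by positivity)
  rw [← mul_le_mul_iff_of_pos_right hDpos]
  have hcast_s : (∑ u ∈ Finset.univ.filter (fun u : Fin (m+1) → F => f u = 0),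
      (hammingNorm u : ℝ)) = (s:ℝ) := by rw [hsdef]; push_cast; ring
  calc (((q : ℝ) / ((q : ℝ) - 1)) * (2 * (t : ℝ) + 1) * (1 - ((q : ℝ) ^ l)⁻¹) - ((m+1 : ℕ):ℝ) +
      (∑ u ∈ Finset.univ.filter (fun u : Fin (m+1) → F => f u = 0), (hammingNorm u : ℝ)) /
        (((q : ℝ) - 1) * (q : ℝ) ^ ((m+1) - 1))) * (((q:ℝ)-1) * ((q:ℝ)^(m+1) * (q:ℝ)^(m+1) * (q:ℝ)^l))
      = ((q:ℝ) * ((N:ℝ) * ((2*(t:ℝ)+1) * ((N:ℝ) - K) + s) - (N:ℝ) * Sall)) * (q:ℝ)^l := by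
        have hane : ((q:ℝ) - 1) ≠ 0 := by linarith
        have hbne : ((q:ℝ))^l ≠ 0 := ne_of_gt hQlpos
        have hcne : ((q:ℝ))^m ≠ 0 := ne_of_gt hQmpos
        rw [hcast_s, hsimp, hN', hSall', hKval]
        push_cast
        field_simp
        ring
    _ ≤ ((r:ℝ) * (N:ℝ)^2 * ((q:ℝ) - 1)) * (q:ℝ)^l := by
        exact mul_le_mul_of_nonneg_right hfinal (le_of_lt hQlpos)
    _ = (r:ℝ) * (((q:ℝ)-1) * ((q:ℝ)^(m+1) * (q:ℝ)^(m+1) * (q:ℝ)^l)) := by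
        rw [hN']; ring
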